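/- Every continuous function f : 𝕌 → ℂ on the unit circle 𝕌 = {u ∈ ℂ : |u| = 1} satisfying u · conj(f(u)) = f(u) for all u ∈ 𝕌 must vanish at some point of 𝕌. -/

import Mathlib

open Complex

theorem stmt_1 (f : ℂ → ℂ)
    (hf : ContinuousOn f {u : ℂ | ‖u‖ = 1})
    (h : ∀ u : ℂ, ‖u‖ = 1 → u * (starRingEnd ℂ) (f u) = f u) :
    ∃ u : ℂ, ‖u‖ = 1 ∧ f u = 0 := by
  set e : ℝ → ℂ := fun t => Complex.exp (t * I) with he
  have habs : ∀ t : ℝ, ‖e t‖ = 1 := fun t => Complex.norm_exp_ofReal_mul_I t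
  set g : ℝ → ℝ := fun θ => (e (-(θ/2)) * f (e θ)).re with hg
  -- w is real
  have hreal : ∀ θ : ℝ, (starRingEnd ℂ) (e (-(θ/2)) * f (e θ)) = e (-(θ/2)) * f (e θ) := by
    intro θ
    have hconj : (starRingEnd ℂ) (e (-(θ/2))) = e (θ/2) := by
      simp only [he, ← Complex.exp_conj]
      congr 1
      simp [Complex.conj_I]
      push_cast
      rw [map_ofNat]
      try ring
    have hfe := h (e θ) (habs θ)
    calc (starRingEnd ℂ) (e (-(θ/2)) * f (e θ))
        = e (θ/2) * (starRingEnd ℂ) (f (e θ)) := by rw [map_mul, hconj]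
      _ = e (-(θ/2)) * (e θ * (starRingEnd ℂ) (f (e θ))) := by
          rw [← mul_assoc]
          congr 1
          simp only [he, ← Complex.exp_add]
          congr 1
          push_cast
          ring
      _ = e (-(θ/2)) * f (e θ) := by rw [hfe]
  have hzero : ∀ θ : ℝ, g θ = 0 → f (e θ) = 0 := by
    intro θ hθ
    have him : (e (-(θ/2)) * f (e θ)).im = 0 :=
      (Complex.conj_eq_iff_im.mp (hreal θ))
    have : e (-(θ/2)) * f (e θ) = 0 := Complex.ext hθ him
    rcases mul_eq_zero.mp this with h1 | h2
    · exact absurd h1 (Complex.exp_ne_zero _)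
    · exact h2
  -- continuity of g
  have hce : Continuous e := by
    exact Complex.continuous_exp.comp (continuous_ofReal.mul continuous_const)
  have hcg : Continuous g := by
    apply Complex.continuous_re.comp
    apply Continuous.mul
    · exact hce.comp (by continuity)
    · exact hf.comp_continuous hce (fun t => habs t)
  -- endpoint values
  have he0 : e 0 = 1 := by simp [he]
  have he2pi : e (2 * Real.pi) = 1 := by
    simp only [he]
    push_cast
    rw [Complex.exp_eq_one_iff]
    exact ⟨1, by push_cast; ring⟩
  have hepi : e (-(2 * Real.pi / 2)) = -1 := by
    have : (-(2 * Real.pi / 2) : ℝ) = -Real.pi := by ring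
    rw [this]
    simp only [he]
    push_cast
    rw [neg_mul, Complex.exp_neg, Complex.exp_pi_mul_I]
    norm_num
  have hg0 : g 0 = (f 1).re := by simp [hg, he0]
  have hg2pi : g (2 * Real.pi) = -(f 1).re := by
    show (e (-(2 * Real.pi / 2)) * f (e (2 * Real.pi))).re = -(f 1).re
    rw [hepi, he2pi]
    simp
  -- IVT
  have hle : (0:ℝ) ≤ 2 * Real.pi := by positivity
  have : ∃ θ ∈ Set.Icc (0:ℝ) (2 * Real.pi), g θ = 0 := by
    rcases le_total (g 0) 0 with h1 | h1
    · have := intermediate_value_Icc hle hcg.continuousOn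
      have h0mem : (0:ℝ) ∈ Set.Icc (g 0) (g (2 * Real.pi)) := by
        constructor
        · exact h1
        · rw [hg2pi]; rw [hg0] at h1; linarith
      rcases this h0mem with ⟨θ, hθmem, hθ⟩
      exact ⟨θ, hθmem, hθ⟩
    · have := intermediate_value_Icc' hle hcg.continuousOn
      have h0mem : (0:ℝ) ∈ Set.Icc (g (2 * Real.pi)) (g 0) := by
        constructor
        · rw [hg2pi]; rw [hg0] at h1; linarith
        · exact h1
      rcases this h0mem with ⟨θ, hθmem, hθ⟩
      exact ⟨θ, hθmem, hθ⟩
  rcases this with ⟨θ, _, hθ⟩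
  exact ⟨e θ, habs θ, hzero θ hθ⟩
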